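/- Let X and Y be compact metrizable spaces and f : X → Y a continuous surjective fully closed map. Then the set C₂f = {y ∈ Y : f⁻¹(y) has more than one point} is countable. -/

import Mathlib

open Set Topology

variable {X Y : Type*} [TopologicalSpace X] [TopologicalSpace Y]

/-- A map is fully closed if images of disjoint closed sets meet in a discrete subspace. -/
def IsFullyClosedMap (f : X → Y) : Prop :=
  ∀ F G : Set X, IsClosed F → IsClosed G → Disjoint F G →
    DiscreteTopology ↥(f '' F ∩ f '' G)

/-- A map is ring-like if every neighborhood pair admits a smaller neighborhood of the image
point whose frontier has preimage inside the given neighborhood of the point. -/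
def IsRingLike (f : X → Y) : Prop :=
  ∀ x : X, ∀ U : Set X, ∀ V : Set Y, IsOpen U → x ∈ U → IsOpen V → f x ∈ V →
    ∃ V' : Set Y, IsOpen V' ∧ f x ∈ V' ∧ V' ⊆ V ∧ f ⁻¹' (frontier V') ⊆ U

/-- A subcontinuum: a compact connected subset. -/
def IsSubcontinuum (A : Set X) : Prop := IsCompact A ∧ IsConnected A

/-- A terminal subcontinuum. -/
def IsTerminalSubcontinuum (A : Set X) : Prop :=
  IsSubcontinuum A ∧ ∀ B : Set X, IsSubcontinuum B → A ∩ B = ∅ ∨ A ⊆ B ∨ B ⊆ A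

/-- An atomic map: point-inverses (of points in the range) are terminal subcontinua. -/
def IsAtomicMap (f : X → Y) : Prop :=
  ∀ y ∈ Set.range f, IsTerminalSubcontinuum (f ⁻¹' {y})

/-- `L` is a partition in `X` between `A` and `B`. -/
def IsPartitionBetween (L A B : Set X) : Prop :=
  IsClosed L ∧ ∃ U V : Set X, IsOpen U ∧ IsOpen V ∧ Disjoint U V ∧
    Lᶜ = U ∪ V ∧ A ⊆ U ∧ B ⊆ V

/-- Covering dimension at most `n`. -/
def CovDimLE (X : Type*) [TopologicalSpace X] (n : ℕ) : Prop :=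
  ∀ (k : ℕ) (U : Fin k → Set X), (∀ i, IsOpen (U i)) → (⋃ i, U i) = Set.univ →
    ∃ (m : ℕ) (V : Fin m → Set X), (∀ j, IsOpen (V j)) ∧ (⋃ j, V j) = Set.univ ∧
      (∀ j, ∃ i, V j ⊆ U i) ∧ ∀ x : X, Set.ncard {j | x ∈ V j} ≤ n + 1

/-- `IndLE n X` means the small inductive dimension of `X` is at most `n - 1`;
in particular `IndLE 0 X` means `X` is empty. -/
def IndLE : ℕ → (X : Type u) → [TopologicalSpace X] → Prop
  | 0, X, _ => IsEmpty X
  | n+1, X, _ => ∀ (x : X) (V : Set X), IsOpen V → x ∈ V →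
      ∃ U : Set X, IsOpen U ∧ x ∈ U ∧ U ⊆ V ∧ IndLE n ↥(frontier U)

open Metric in
theorem statement1 {X Y : Type*} [TopologicalSpace X] [TopologicalSpace Y]
    [CompactSpace X] [T2Space X] [TopologicalSpace.MetrizableSpace X]
    [CompactSpace Y] [T2Space Y] [TopologicalSpace.MetrizableSpace Y]
    (f : X → Y) (hf : Continuous f) (hsurj : Function.Surjective f)
    (hfc : IsFullyClosedMap f) :
    Set.Countable {y : Y | (f ⁻¹' {y}).Nontrivial} := by
  letI : MetricSpace X := TopologicalSpace.metrizableSpaceMetric X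
  have key : ∀ n : ℕ, Set.Finite
      {y : Y | ∃ x₁ x₂ : X, f x₁ = y ∧ f x₂ = y ∧ 1 / (n + 1 : ℝ) ≤ dist x₁ x₂} := by
    intro n
    set r : ℝ := 1 / (5 * (n + 1)) with hrdef
    have hrpos : 0 < r := by positivity
    obtain ⟨t, -, htf, htc⟩ := finite_cover_balls_of_compact (isCompact_univ (X := X)) hrpos
    have hfin : ∀ c₁ c₂ : X, Set.Finite
        {y | Disjoint (closedBall c₁ r) (closedBall c₂ r) ∧
          y ∈ f '' closedBall c₁ r ∩ f '' closedBall c₂ r} := by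
      intro c₁ c₂
      by_cases hd : Disjoint (closedBall c₁ r) (closedBall c₂ r)
      · have hdt := hfc _ _ isClosed_closedBall isClosed_closedBall hd
        have hcomp : IsCompact (f '' closedBall c₁ r ∩ f '' closedBall c₂ r) :=
          ((isCompact_closedBall c₁ r).image hf).inter_right
            ((isCompact_closedBall c₂ r).image hf).isClosed
        exact (hcomp.finite (isDiscrete_iff_discreteTopology.mpr hdt)).subset fun y hy => hy.2
      · convert Set.finite_empty
        ext y; simp [hd]
    have : {y : Y | ∃ x₁ x₂ : X, f x₁ = y ∧ f x₂ = y ∧ 1 / (n + 1 : ℝ) ≤ dist x₁ x₂} ⊆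
        ⋃ c₁ ∈ t, ⋃ c₂ ∈ t,
          {y | Disjoint (closedBall c₁ r) (closedBall c₂ r) ∧
            y ∈ f '' closedBall c₁ r ∩ f '' closedBall c₂ r} := by
      rintro y ⟨x₁, x₂, h1, h2, hdist⟩
      obtain ⟨_, ⟨c₁, rfl⟩, _, ⟨hc₁t, rfl⟩, hx₁⟩ := htc (mem_univ x₁)
      obtain ⟨_, ⟨c₂, rfl⟩, _, ⟨hc₂t, rfl⟩, hx₂⟩ := htc (mem_univ x₂)
      have hdisj : Disjoint (closedBall c₁ r) (closedBall c₂ r) := by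
        rw [Set.disjoint_left]
        intro u hu₁ hu₂
        have h5 : (5 : ℝ) * r = 1 / (n + 1) := by
          rw [hrdef]; field_simp
        have : dist x₁ x₂ ≤ dist x₁ c₁ + dist c₁ u + dist u c₂ + dist c₂ x₂ := by
          calc dist x₁ x₂ ≤ dist x₁ c₁ + dist c₁ x₂ := dist_triangle _ _ _
            _ ≤ dist x₁ c₁ + (dist c₁ u + dist u x₂) := by
                linarith [dist_triangle c₁ u x₂]
            _ ≤ dist x₁ c₁ + (dist c₁ u + (dist u c₂ + dist c₂ x₂)) := by
                linarith [dist_triangle u c₂ x₂]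
            _ = _ := by ring
        have hx₁' : dist x₁ c₁ < r := mem_ball.mp hx₁
        have hx₂' : dist x₂ c₂ < r := mem_ball.mp hx₂
        have hu₁' : dist c₁ u ≤ r := by
          rw [dist_comm]; exact mem_closedBall.mp hu₁
        have hu₂' : dist u c₂ ≤ r := mem_closedBall.mp hu₂
        rw [dist_comm x₂ c₂] at hx₂'
        linarith
      exact Set.mem_biUnion hc₁t (Set.mem_biUnion hc₂t
        ⟨hdisj, ⟨x₁, ball_subset_closedBall hx₁, h1⟩,
          ⟨x₂, ball_subset_closedBall hx₂, h2⟩⟩)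
    exact Set.Finite.subset (htf.biUnion fun c₁ _ => htf.biUnion fun c₂ _ => hfin c₁ c₂) this
  have hsub : {y : Y | (f ⁻¹' {y}).Nontrivial} ⊆
      ⋃ n : ℕ, {y : Y | ∃ x₁ x₂ : X, f x₁ = y ∧ f x₂ = y ∧ 1 / (n + 1 : ℝ) ≤ dist x₁ x₂} := by
    rintro y ⟨x₁, hx₁, x₂, hx₂, hne⟩
    obtain ⟨n, hn⟩ := exists_nat_one_div_lt (dist_pos.mpr hne)
    exact Set.mem_iUnion.mpr ⟨n, x₁, x₂, hx₁, hx₂, hn.le⟩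
  exact Set.Countable.mono hsub (Set.countable_iUnion fun n => (key n).countable)
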